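/- arXiv:math/0207210 — 4 statements merged into one kernel-verified Lean document; each statement's English description precedes it below -/
import Mathlib

section
/- Let f : X → Y be a proper surjective morphism of noetherian schemes. If X is separated, then Y is separated. -/
open AlgebraicGeometry CategoryTheory

open CategoryTheory.Limits in
/-- If `f : X ⟶ Y` is a proper surjective morphism of noetherian schemes and `X` is
separated, then `Y` is separated. -/
theorem isSeparated_of_proper_surjective {X Y : Scheme.{0}} (f : X ⟶ Y)
    [IsNoetherian X] [IsNoetherian Y] [IsProper f] [Surjective f] [X.IsSeparated] :
    Y.IsSeparated := by
  refine ⟨⟨?_⟩⟩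
  set g : Y ⟶ ⊤_ _ := terminal.from Y with hg
  have hcomp : terminal.from X = f ≫ g := (terminal.comp_from f).symm
  let q : pullback (terminal.from X) (terminal.from X) ⟶ pullback g g :=
    pullback.map _ _ _ _ f f (𝟙 _) ((Category.comp_id _).trans hcomp)
      ((Category.comp_id _).trans hcomp)
  have hq : UniversallyClosed q :=
    MorphismProperty.pullback_map (P := @UniversallyClosed)
      inferInstance inferInstance hcomp hcomp
  have hcomm : pullback.diagonal (terminal.from X) ≫ q = f ≫ pullback.diagonal g := by
    apply pullback.hom_ext
    · simp only [q, pullback.map, Category.assoc]; rw [pullback.lift_fst]; simp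
    · simp only [q, pullback.map, Category.assoc]; rw [pullback.lift_snd]; simp
  have key : Set.range (pullback.diagonal g).base =
      q.base '' Set.range (pullback.diagonal (terminal.from X)).base := by
    rw [← Set.range_comp, ← TopCat.coe_comp, ← Scheme.Hom.comp_base, hcomm, Scheme.Hom.comp_base,
      TopCat.coe_comp, Set.range_comp, f.surjective.range_eq, Set.image_univ]
  apply IsClosedImmersion.of_isPreimmersion
  rw [key]
  exact q.isClosedMap _
    (IsClosedImmersion.base_closed (f := pullback.diagonal (terminal.from X))).2
end

section
/- Let g ∘ f be a proper morphism of schemes, where f : A → B is surjective and g : B → C is separated and of finite type. Then g is proper. -/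
open AlgebraicGeometry CategoryTheory

/-- EGA II.5.4.3: if `g ∘ f` is proper, `f` is surjective and `g` is separated and of
finite type, then `g` is proper. -/
theorem isProper_of_comp_surjective {A B C : Scheme.{0}} (f : A ⟶ B) (g : B ⟶ C)
    [IsProper (f ≫ g)] [Surjective f] [IsSeparated g] [LocallyOfFiniteType g]
    [QuasiCompact g] :
    IsProper g := by
  have : UniversallyClosed (f ≫ g) := inferInstance
  have := UniversallyClosed.of_comp_surjective f g
  constructor
end

section
/- Let G be a finite group acting on a quasi-affine scheme W over a commutative ring, such that every G-orbit is contained in an affine open subset of the form {f ≠ 0} for f a global regular function. Then every G-orbit is contained in an affine open subset of the form {g ≠ 0} for a G-invariant global regular function g. -/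
open AlgebraicGeometry CategoryTheory

/-- Let a finite group `G` act on a quasi-affine scheme `W` over a commutative ring `R`.
If every `G`-orbit is contained in an affine open subset of the form `{f ≠ 0}` for a
global regular function `f`, then every `G`-orbit is contained in an affine open subset
of the form `{g ≠ 0}` for a `G`-invariant global regular function `g`. -/
theorem orbit_in_invariant_affine_basicOpen
    (R : Type) [CommRing R] (G : Type) [Group G] [Finite G]
    (W : Scheme.{0}) (p : W ⟶ Spec (CommRingCat.of R))
    (hqa : ∃ (Z : Scheme.{0}) (i : W ⟶ Z), IsAffine Z ∧ IsOpenImmersion i)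
    (ρ : G →* Aut W) (hover : ∀ g : G, (ρ g).hom ≫ p = p)
    (horb : ∀ x : W, ∃ f : Γ(W, ⊤),
      IsAffineOpen (W.basicOpen f) ∧ ∀ g : G, (ρ g).hom.base x ∈ W.basicOpen f) :
    ∀ x : W, ∃ h : Γ(W, ⊤), (∀ g : G, (ρ g).hom.appTop h = h) ∧
      IsAffineOpen (W.basicOpen h) ∧ ∀ g : G, (ρ g).hom.base x ∈ W.basicOpen h := by
  intro x
  obtain ⟨f, haff, hmem⟩ := horb x
  have : Fintype G := Fintype.ofFinite G
  set F : G → Γ(W, ⊤) := fun σ => (ρ σ).hom.appTop f with hF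
  have key : ∀ σ τ : G, (ρ τ).hom.appTop (F σ) = F (σ * τ) := by
    intro σ τ
    have hcomp : (ρ (σ * τ)).hom = (ρ τ).hom ≫ (ρ σ).hom := by
      rw [map_mul]; rfl
    simp only [hF, hcomp, Scheme.Hom.comp_appTop, CommRingCat.comp_apply]
  have hF1 : F 1 = f := by
    simp only [hF, map_one]
    rfl
  have hbF : ∀ σ : G, W.basicOpen (F σ) = (ρ σ).hom ⁻¹ᵁ (W.basicOpen f) :=
    fun σ => (Scheme.preimage_basicOpen_top _ _).symm
  have hprod : ∀ (s : Finset G), W.basicOpen (∏ σ ∈ s, F σ) =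
      s.inf fun σ => W.basicOpen (F σ) := by
    intro s
    classical
    induction s using Finset.induction with
    | empty => simp [Scheme.basicOpen_of_isUnit W isUnit_one]
    | insert _ _ h ih =>
        rw [Finset.prod_insert h, Scheme.basicOpen_mul, Finset.inf_insert, ih]
  refine ⟨∏ σ : G, F σ, ?_, ?_, ?_⟩
  · intro τ
    rw [map_prod]
    simp only [key]
    exact Fintype.prod_equiv (Equiv.mulRight τ) _ _ (fun σ => rfl)
  · have hle : W.basicOpen (∏ σ : G, F σ) ≤ W.basicOpen f := by
      rw [hprod, ← hF1]
      exact Finset.inf_le (Finset.mem_univ 1)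
    have := haff.basicOpen (W.presheaf.map (homOfLE le_top).op (∏ σ : G, F σ))
    rwa [Scheme.basicOpen_res, inf_eq_right.mpr hle] at this
  · intro τ
    have hterm : ∀ σ : G, (ρ τ).hom.base x ∈ W.basicOpen (F σ) := by
      intro σ
      rw [hbF σ]
      show ((ρ τ).hom ≫ (ρ σ).hom).base x ∈ W.basicOpen f
      have hcomp : (ρ τ).hom ≫ (ρ σ).hom = (ρ (σ * τ)).hom := by
        rw [map_mul]; rfl
      rw [hcomp]
      exact hmem (σ * τ)
    have hmemprod : ∀ (s : Finset G), (ρ τ).hom.base x ∈ W.basicOpen (∏ σ ∈ s, F σ) := by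
      intro s
      classical
      induction s using Finset.induction with
      | empty => simp [Scheme.basicOpen_of_isUnit W isUnit_one]
      | insert _ _ h ih =>
          rw [Finset.prod_insert h, Scheme.basicOpen_mul]
          exact ⟨hterm _, ih⟩
    exact hmemprod Finset.univ
end

section
/- Let k be a field, and let Y be the scheme obtained by gluing two copies of A^r_k along A^r − 0 via the identity (r ≥ 2). Then every morphism from A^r − 0 to GL(n) over k extends uniquely to a morphism A^r → GL(n); consequently every vector bundle on Y that is trivial on each of the two copies of A^r is trivial on Y. -/
open AlgebraicGeometry CategoryTheory TopologicalSpace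

/-- The punctured affine space `𝔸^r − 0`: the complement of the origin (the zero locus
of the coordinates `X i`) in `Spec k[X₁,…,X_r]`. -/
def punctured (k : Type) [Field k] (r : ℕ) :
    Opens (PrimeSpectrum.Top (MvPolynomial (Fin r) k)) :=
  ⟨(PrimeSpectrum.zeroLocus
      (Set.range (MvPolynomial.X : Fin r → MvPolynomial (Fin r) k)))ᶜ,
    (PrimeSpectrum.isClosed_zeroLocus _).isOpen_compl⟩

open Opposite


theorem aux_units {A B : Type*} [CommRing A] [CommRing B] (n : ℕ) (f : A →+* B)
    (hf : Function.Bijective f) (M : (Matrix (Fin n) (Fin n) B)ˣ) :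
    ∃! N : (Matrix (Fin n) (Fin n) A)ˣ,
      Units.map (RingHom.mapMatrix f).toMonoidHom N = M := by
  let e : A ≃+* B := RingEquiv.ofBijective f hf
  let μ : Matrix (Fin n) (Fin n) A ≃* Matrix (Fin n) (Fin n) B := e.mapMatrix.toMulEquiv
  have hφ : ∀ x, (RingHom.mapMatrix f) x = μ x := fun x => rfl
  have hinj : Function.Injective (⇑(Units.map (RingHom.mapMatrix f).toMonoidHom : (Matrix (Fin n) (Fin n) A)ˣ →* (Matrix (Fin n) (Fin n) B)ˣ)) := by
    intro N N' h
    apply Units.ext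
    have h2 : (RingHom.mapMatrix f) N.val = (RingHom.mapMatrix f) N'.val := congrArg Units.val h
    rw [hφ, hφ] at h2
    exact μ.injective h2
  have key : Units.map (RingHom.mapMatrix f).toMonoidHom ((Units.mapEquiv μ).symm M) = M := by
    apply Units.ext
    show (RingHom.mapMatrix f) ((Units.mapEquiv μ).symm M).val = M.val
    rw [hφ]
    simp [Units.mapEquiv]
  exact ⟨(Units.mapEquiv μ).symm M, key, fun N' hN' => hinj (by rw [hN', key])⟩


theorem punctured_eq (k : Type) [Field k] (r : ℕ) :
    punctured k r = ⨆ i : Fin r, PrimeSpectrum.basicOpen (MvPolynomial.X i (R := k)) := by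
  ext (x : PrimeSpectrum (MvPolynomial (Fin r) k))
  show x ∈ (PrimeSpectrum.zeroLocus (Set.range (MvPolynomial.X (R := k) (σ := Fin r))))ᶜ ↔
    x ∈ (((⨆ i : Fin r, PrimeSpectrum.basicOpen (MvPolynomial.X i (R := k))) :
      Opens (PrimeSpectrum (MvPolynomial (Fin r) k))) : Set (PrimeSpectrum (MvPolynomial (Fin r) k)))
  simp only [Opens.coe_iSup, Set.mem_iUnion, SetLike.mem_coe, Set.mem_compl_iff]
  constructor
  · intro h
    rw [PrimeSpectrum.mem_zeroLocus, Set.range_subset_iff] at h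
    push_neg at h
    obtain ⟨i, hi⟩ := h
    exact ⟨i, (PrimeSpectrum.mem_basicOpen _ _).mpr hi⟩
  · rintro ⟨i, hi⟩ h
    rw [PrimeSpectrum.mem_zeroLocus, Set.range_subset_iff] at h
    exact (PrimeSpectrum.mem_basicOpen _ _).mp hi (h i)

theorem prime_X0 (k : Type) [Field k] (m : ℕ) :
    Prime (MvPolynomial.X 0 : MvPolynomial (Fin (m+1)) k) := by
  rw [← MulEquiv.prime_iff (MvPolynomial.finSuccEquiv k m)]
  have h : Prime ((MvPolynomial.finSuccEquiv k m) (MvPolynomial.X 0)) := by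
    rw [MvPolynomial.finSuccEquiv_X_zero]; exact Polynomial.prime_X
  exact h

theorem toOpen_bijective (k : Type) [Field k] (r : ℕ) (hr : 2 ≤ r) :
    Function.Bijective (StructureSheaf.toOpen (MvPolynomial (Fin r) k) (punctured k r)) := by
  obtain ⟨m, rfl⟩ : ∃ m, r = m + 2 := ⟨r - 2, by omega⟩
  set R := MvPolynomial (Fin (m+2)) k with hR
  set U := punctured k (m+2) with hUdef
  let X : Fin (m+2) → R := MvPolynomial.X
  have hXne : ∀ i, (X i) ≠ 0 := fun i => MvPolynomial.X_ne_zero i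
  have hprime : Prime (X 0) := prime_X0 k (m+1)
  have hcover : U = ⨆ i : Fin (m+2), PrimeSpectrum.basicOpen (X i) := punctured_eq k (m+2)
  have hle : ∀ i, PrimeSpectrum.basicOpen (X i) ≤ U :=
    fun i => (le_iSup (fun i => PrimeSpectrum.basicOpen (X i)) i).trans hcover.ge
  let F := Spec.structureSheaf R
  have hinj : ∀ (f : R), f ≠ 0 →
      Function.Injective (StructureSheaf.toOpen R (PrimeSpectrum.basicOpen f)) :=
    fun f hf => by
      letI : Algebra R ((Spec.structureSheaf R).obj.obj (op (PrimeSpectrum.basicOpen f))) :=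
        StructureSheaf.openAlgebra R _
      haveI : IsLocalization.Away f ((Spec.structureSheaf R).obj.obj (op (PrimeSpectrum.basicOpen f))) :=
        StructureSheaf.IsLocalization.to_basicOpen R f
      exact IsLocalization.injective (M := Submonoid.powers f)
        ((Spec.structureSheaf R).obj.obj (op (PrimeSpectrum.basicOpen f)))
        (powers_le_nonZeroDivisors_of_noZeroDivisors hf)
  constructor
  · intro f g h
    have h0 : StructureSheaf.toOpen R (PrimeSpectrum.basicOpen (X 0)) f
        = StructureSheaf.toOpen R (PrimeSpectrum.basicOpen (X 0)) g :=
      congrArg ((Spec.structureSheaf R).1.map (homOfLE (hle 0)).op) h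
    exact hinj (X 0) (hXne 0) h0
  · intro s
    let sec : ∀ i, (Spec.structureSheaf R).1.obj (op (PrimeSpectrum.basicOpen (X i))) :=
      fun i => (Spec.structureSheaf R).1.map (homOfLE (hle i)).op s
    have data : ∀ i, ∃ (h : R) (c : ℕ),
        sec i * StructureSheaf.toOpen R (PrimeSpectrum.basicOpen (X i)) (X i ^ c)
          = StructureSheaf.toOpen R (PrimeSpectrum.basicOpen (X i)) h := by
      intro i
      letI : Algebra R ((Spec.structureSheaf R).obj.obj (op (PrimeSpectrum.basicOpen (X i)))) :=
        StructureSheaf.openAlgebra R _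
      haveI : IsLocalization.Away (X i) ((Spec.structureSheaf R).obj.obj (op (PrimeSpectrum.basicOpen (X i)))) :=
        StructureSheaf.IsLocalization.to_basicOpen R (X i)
      obtain ⟨⟨h, d⟩, hd⟩ := IsLocalization.surj (M := Submonoid.powers (X i))
        (S := (Spec.structureSheaf R).obj.obj (op (PrimeSpectrum.basicOpen (X i)))) (sec i)
      obtain ⟨c, hc⟩ := d.2
      refine ⟨h, c, ?_⟩
      rw [show (X i ^ c) = (d : R) from hc]
      exact hd
    choose h c hdata using data
    have cross : ∀ i, h 0 * X i ^ c i = h i * X 0 ^ c 0 := by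
      intro i
      set W : Opens (PrimeSpectrum.Top R) := PrimeSpectrum.basicOpen (X 0 * X i) with hW
      have hW0 : W ≤ PrimeSpectrum.basicOpen (X 0) := by
        rw [hW, PrimeSpectrum.basicOpen_mul]; exact inf_le_left
      have hWi : W ≤ PrimeSpectrum.basicOpen (X i) := by
        rw [hW, PrimeSpectrum.basicOpen_mul]; exact inf_le_right
      have hts : ∀ (j : Fin (m+2)) (hVj : W ≤ PrimeSpectrum.basicOpen (X j)),
          (Spec.structureSheaf R).1.map (homOfLE hVj).op (sec j) = (Spec.structureSheaf R).1.map (homOfLE ((hW0.trans (hle 0)))).op s := by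
        intro j hVj
        show (Spec.structureSheaf R).1.map (homOfLE hVj).op ((Spec.structureSheaf R).1.map (homOfLE (hle j)).op s) = _
        rfl
      have hres : ∀ (V V' : Opens (PrimeSpectrum.Top R)) (hvv : V ≤ V') (x : R),
          (Spec.structureSheaf R).1.map (homOfLE hvv).op (StructureSheaf.toOpen R V' x)
            = StructureSheaf.toOpen R V x := fun _ _ _ _ => rfl
      have e0 := congrArg ((Spec.structureSheaf R).1.map (homOfLE hW0).op) (hdata 0)
      have ei := congrArg ((Spec.structureSheaf R).1.map (homOfLE hWi).op) (hdata i)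
      rw [map_mul] at e0 ei
      erw [hts 0 hW0, hres W _ hW0 (X 0 ^ c 0), hres W _ hW0 (h 0)] at e0
      erw [hts i hWi, hres W _ hWi (X i ^ c i), hres W _ hWi (h i)] at ei
      have key : StructureSheaf.toOpen R W (h 0 * X i ^ c i)
          = StructureSheaf.toOpen R W (h i * X 0 ^ c 0) := by
        rw [map_mul, map_mul]
        calc StructureSheaf.toOpen R W (h 0) * StructureSheaf.toOpen R W (X i ^ c i)
            = ((Spec.structureSheaf R).1.map (homOfLE ((hW0.trans (hle 0)))).op s
                * StructureSheaf.toOpen R W (X 0 ^ c 0))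
                * StructureSheaf.toOpen R W (X i ^ c i) := by
              rw [← e0]
          _ = ((Spec.structureSheaf R).1.map (homOfLE ((hW0.trans (hle 0)))).op s
                * StructureSheaf.toOpen R W (X i ^ c i))
                * StructureSheaf.toOpen R W (X 0 ^ c 0) := by ring
          _ = StructureSheaf.toOpen R W (h i) * StructureSheaf.toOpen R W (X 0 ^ c 0) := by
              rw [← ei]
      exact hinj _ (mul_ne_zero (hXne 0) (hXne i)) key
    have hdvd : (X 0) ^ (c 0) ∣ h 0 := by
      refine hprime.pow_dvd_of_dvd_mul_right _ ?_ ⟨h 1, by rw [cross 1]; ring⟩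
      intro hd
      have h01 : (0 : Fin (m+2)) = 1 := MvPolynomial.X_dvd_X.mp (hprime.dvd_of_dvd_pow hd)
      exact absurd h01 Fin.zero_ne_one
    obtain ⟨g, hg⟩ := hdvd
    have hhi : ∀ i, h i = g * X i ^ c i := by
      intro i
      have hci := cross i
      rw [hg] at hci
      have hne : (X 0 : R) ^ c 0 ≠ 0 := pow_ne_zero _ (hXne 0)
      apply mul_right_cancel₀ hne
      rw [← hci]; ring
    refine ⟨g, ?_⟩
    apply (Spec.structureSheaf R).eq_of_locally_eq' (fun i => PrimeSpectrum.basicOpen (X i)) U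
      (fun i => homOfLE (hle i)) hcover.le
    intro i
    show StructureSheaf.toOpen R (PrimeSpectrum.basicOpen (X i)) g = sec i
    letI : Algebra R ((Spec.structureSheaf R).obj.obj (op (PrimeSpectrum.basicOpen (X i)))) :=
      StructureSheaf.openAlgebra R _
    haveI : IsLocalization.Away (X i) ((Spec.structureSheaf R).obj.obj (op (PrimeSpectrum.basicOpen (X i)))) :=
      StructureSheaf.IsLocalization.to_basicOpen R (X i)
    have hu : IsUnit (StructureSheaf.toOpen R (PrimeSpectrum.basicOpen (X i)) (X i ^ c i)) :=
      IsLocalization.map_units (M := Submonoid.powers (X i))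
        ((Spec.structureSheaf R).obj.obj (op (PrimeSpectrum.basicOpen (X i)))) ⟨X i ^ c i, ⟨c i, rfl⟩⟩
    apply hu.mul_right_cancel
    rw [← map_mul, ← hhi i, ← hdata i]

/-- For `r ≥ 2`, every morphism `𝔸^r − 0 → GL(n)`, i.e. every invertible `n×n` matrix of
regular functions on `𝔸^r − 0`, extends uniquely to a morphism `𝔸^r → GL(n)`, i.e. comes
from a unique invertible `n×n` matrix of polynomials.  (Consequently a vector bundle on
the scheme obtained by gluing two copies of `𝔸^r` along `𝔸^r − 0` which is trivial on
both copies has trivial transition function, hence is trivial.) -/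
theorem matrix_units_extend (k : Type) [Field k] (r n : ℕ) (hr : 2 ≤ r)
    (M : (Matrix (Fin n) (Fin n)
      ((Spec.structureSheaf (MvPolynomial (Fin r) k)).presheaf.obj
        (Opposite.op (punctured k r))))ˣ) :
    ∃! N : (Matrix (Fin n) (Fin n) (MvPolynomial (Fin r) k))ˣ,
      Units.map (RingHom.mapMatrix
        (StructureSheaf.toOpen (MvPolynomial (Fin r) k) (punctured k r)).hom).toMonoidHom
          N = M := by
  exact aux_units n _ (toOpen_bijective k r hr) M
end
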